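/- Given a convex lattice polygon P ⊂ ℝ² with at least 2 vertices, there exists a convex lattice polygon P' ⊆ P with the same number of vertices such that every lattice point on the boundary of P' is a vertex of P'. -/

import Mathlib

open Set



/-- Embedding of lattice points into the plane. -/
def latpt (p : ℤ × ℤ) : ℝ × ℝ := ((p.1 : ℝ), (p.2 : ℝ))

lemma latpt_inj : Function.Injective latpt := by
  intro p q h
  have h1 : (p.1:ℝ) = q.1 := congrArg Prod.fst h
  have h2 : (p.2:ℝ) = q.2 := congrArg Prod.snd h
  exact Prod.ext (by exact_mod_cast h1) (by exact_mod_cast h2)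

lemma lattice_finite {K : Set (ℝ×ℝ)} (hK : Bornology.IsBounded K) :
    {q : ℤ × ℤ | latpt q ∈ K}.Finite := by
  obtain ⟨r, hr⟩ := hK.subset_closedBall 0
  apply Set.Finite.subset (Set.finite_Icc (α := ℤ × ℤ) (-⌊r⌋, -⌊r⌋) (⌊r⌋, ⌊r⌋))
  intro q hq
  have h := hr hq
  rw [Metric.mem_closedBall, dist_zero_right] at h
  simp only [latpt] at h
  have h1 : |(q.1 : ℝ)| ≤ r := by
    have := norm_fst_le (latpt q)
    simp only [latpt, Real.norm_eq_abs] at this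
    linarith
  have h2 : |(q.2 : ℝ)| ≤ r := by
    have := norm_snd_le (latpt q)
    simp only [latpt, Real.norm_eq_abs] at this
    linarith
  have h1' : |q.1| ≤ ⌊r⌋ := Int.le_floor.2 (by exact_mod_cast h1)
  have h2' : |q.2| ≤ ⌊r⌋ := Int.le_floor.2 (by exact_mod_cast h2)
  rw [abs_le] at h1' h2'
  constructor
  · exact ⟨h1'.1, h2'.1⟩
  · exact ⟨h1'.2, h2'.2⟩


lemma face_lemma (T : Finset (ℝ×ℝ)) (f : (ℝ×ℝ) →L[ℝ] ℝ) (c : ℝ)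
    (hle : ∀ s ∈ T, f s ≤ c) {x : ℝ×ℝ} (hx : x ∈ convexHull ℝ (T : Set (ℝ×ℝ)))
    (hxc : f x = c) : x ∈ convexHull ℝ {s : ℝ×ℝ | s ∈ T ∧ f s = c} := by
  classical
  rw [Finset.convexHull_eq] at hx
  obtain ⟨w, hw0, hw1, hwx⟩ := hx
  rw [Finset.centerMass_eq_of_sum_1 _ _ hw1] at hwx
  simp only [id] at hwx
  -- f x = ∑ w y * f y
  have hfx : ∑ y ∈ T, w y * f y = c := by
    rw [← hxc, ← hwx, map_sum]
    simp [smul_eq_mul]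
  have key : ∀ y ∈ T, w y ≠ 0 → f y = c := by
    by_contra hcon
    push_neg at hcon
    obtain ⟨y₀, hy₀T, hy₀w, hy₀f⟩ := hcon
    have hlt : ∑ y ∈ T, w y * f y < ∑ y ∈ T, w y * c := by
      apply Finset.sum_lt_sum
      · intro i hi
        exact mul_le_mul_of_nonneg_left (hle i hi) (hw0 i hi)
      · exact ⟨y₀, hy₀T, mul_lt_mul_of_pos_left (lt_of_le_of_ne (hle y₀ hy₀T) hy₀f)
          (lt_of_le_of_ne (hw0 y₀ hy₀T) (Ne.symm hy₀w))⟩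
    rw [hfx, ← Finset.sum_mul, hw1, one_mul] at hlt
    exact lt_irrefl c hlt
  set T' := T.filter (fun y => f y = c) with hT'
  have hsub : T' ⊆ T := Finset.filter_subset _ _
  have hsum1 : ∑ y ∈ T', w y = 1 := by
    rw [← hw1]
    apply Finset.sum_subset hsub
    intro y hy hy'
    by_contra hne
    exact hy' (Finset.mem_filter.2 ⟨hy, key y hy hne⟩)
  have hxeq : x = ∑ y ∈ T', w y • y := by
    rw [← hwx]
    apply (Finset.sum_subset hsub _).symm
    intro y hy hy'
    have : w y = 0 := by
      by_contra hne
      exact hy' (Finset.mem_filter.2 ⟨hy, key y hy hne⟩)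
    rw [this, zero_smul]
  have := T'.centerMass_mem_convexHull (w := w) (z := id)
    (fun i hi => hw0 i (hsub hi)) (by rw [hsum1]; norm_num)
    (fun i hi => (by exact Finset.mem_filter.1 hi |>.imp (fun h => h) (fun h => h) :
      i ∈ {s : ℝ×ℝ | s ∈ T ∧ f s = c}))
  rw [Finset.centerMass_eq_of_sum_1 _ _ hsum1] at this
  simp only [id] at this
  rwa [← hxeq] at this


lemma f_eval (f : (ℝ×ℝ) →L[ℝ] ℝ) (w : ℝ×ℝ) :
    f w = w.1 * f (1,0) + w.2 * f (0,1) := by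
  have hw : w = w.1 • ((1:ℝ),(0:ℝ)) + w.2 • ((0:ℝ),(1:ℝ)) := by
    ext <;> simp
  rw [hw, map_add, map_smul, map_smul]
  simp [smul_eq_mul]

lemma collinear_of_functional (f : (ℝ×ℝ) →L[ℝ] ℝ) (hf : f ≠ 0) (c : ℝ) :
    Collinear ℝ {x : ℝ×ℝ | f x = c} := by
  rcases Set.eq_empty_or_nonempty {x : ℝ×ℝ | f x = c} with he | ⟨p₀, hp₀⟩
  · rw [he]; exact collinear_empty ℝ _
  set α := f (1,0) with hα
  set β := f (0,1) with hβ
  have hab : α ≠ 0 ∨ β ≠ 0 := by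
    by_contra hcon
    push_neg at hcon
    apply hf
    apply ContinuousLinearMap.ext
    intro w
    rw [f_eval, ← hα, ← hβ, hcon.1, hcon.2]
    simp
  rw [collinear_iff_of_mem hp₀]
  refine ⟨(β, -α), ?_⟩
  intro p hp
  have hp0 : f p₀ = c := hp₀
  have hpc : f p = c := hp
  have heq : α * (p.1 - p₀.1) + β * (p.2 - p₀.2) = 0 := by
    have e1 := f_eval f p
    have e2 := f_eval f p₀
    rw [hpc] at e1; rw [hp0] at e2
    rw [← hα, ← hβ] at e1 e2
    nlinarith [e1, e2]
  rcases hab.symm with hb | ha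
  · refine ⟨(p.1 - p₀.1)/β, ?_⟩
    have h2 : p.2 - p₀.2 = -((p.1 - p₀.1)/β * α) := by
      field_simp
      nlinarith [heq]
    ext
    · simp [Prod.smul_mk]
      field_simp
      ring
    · simp [Prod.smul_mk]
      linarith [h2]
  · refine ⟨-(p.2 - p₀.2)/α, ?_⟩
    have h1 : α * (p.1 - p₀.1) = -(β * (p.2 - p₀.2)) := by linarith [heq]
    ext
    · simp only [Prod.smul_mk, Prod.fst_add, Prod.mk_add_mk, smul_eq_mul, vadd_eq_add]
      field_simp
      nlinarith [h1]
    · simp only [Prod.smul_mk, Prod.snd_add, Prod.mk_add_mk, smul_eq_mul, vadd_eq_add]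
      field_simp
      ring


lemma collinear_extreme_sub {A S : Set (ℝ×ℝ)} (hS : S ⊆ Set.extremePoints ℝ A)
    (hcol : Collinear ℝ S) : ∃ a b : ℝ×ℝ, S ⊆ {a, b} := by
  by_cases hsub : S.Subsingleton
  · rcases Set.eq_empty_or_nonempty S with he | ⟨a, ha⟩
    · exact ⟨0, 0, by rw [he]; exact Set.empty_subset _⟩
    · exact ⟨a, a, fun x hx => by rw [hsub hx ha]; exact Set.mem_insert a _⟩
  · rw [Set.not_subsingleton_iff] at hsub
    obtain ⟨a, ha, b, hb, hab⟩ := hsub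
    refine ⟨a, b, ?_⟩
    intro cc hcc
    by_contra hco
    simp only [Set.mem_insert_iff, Set.mem_singleton_iff, not_or] at hco
    obtain ⟨hca, hcb⟩ := hco
    have h3 : Collinear ℝ ({a, b, cc} : Set (ℝ×ℝ)) := by
      apply hcol.subset
      intro x hx
      rcases hx with rfl | rfl | rfl
      exacts [ha, hb, hcc]
    have hmem : ∀ x ∈ S, x ∈ A := fun x hx => extremePoints_subset (hS hx)
    have block : ∀ x y z : ℝ×ℝ, x ∈ S → y ∈ S → z ∈ S → y ≠ x → y ≠ z →
        Wbtw ℝ x y z → False := by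
      intro x y z hx hy hz hyx hyz hw
      have hseg : y ∈ segment ℝ x z := hw.mem_segment
      have hop : y ∈ openSegment ℝ x z :=
        mem_openSegment_of_ne_left_right (Ne.symm hyx) (Ne.symm hyz) hseg
      have := (hS hy).2 (hmem x hx) (hmem z hz) hop
      exact hyx (this.symm)
    rcases h3.wbtw_or_wbtw_or_wbtw with h | h | h
    · exact block a b cc ha hb hcc hab.symm (Ne.symm hcb) h
    · exact block b cc a hb hcc ha hcb hca h
    · exact block cc a b hcc ha hb (Ne.symm hca) hab h

lemma endpoint_extreme {a p x y : ℝ×ℝ} (hx : x ∈ segment ℝ a p) (hy : y ∈ segment ℝ a p)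
    (hp : p ∈ openSegment ℝ x y) : x = p ∧ y = p := by
  by_cases hap : a = p
  · rw [hap, segment_same] at hx hy
    exact ⟨hx, hy⟩
  · obtain ⟨u, v, hu, hv, huv, hxx⟩ := hx
    obtain ⟨u', v', hu', hv', huv', hyy⟩ := hy
    obtain ⟨t, t', ht, ht', htt, hpp⟩ := hp
    have hxp : x - p = u • (a - p) := by
      rw [← hxx]
      have : v = 1 - u := by linarith
      rw [this]
      module
    have hyp : y - p = u' • (a - p) := by
      rw [← hyy]
      have : v' = 1 - u' := by linarith
      rw [this]
      module
    have hzero : (t * u + t' * u') • (a - p) = (0 : ℝ×ℝ) := by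
      have h0 : t • (x - p) + t' • (y - p) = (0:ℝ×ℝ) := by
        rw [← hpp]
        have : t' = 1 - t := by linarith
        rw [this]
        module
      rw [hxp, hyp] at h0
      rw [← h0]
      module
    have hne : a - p ≠ 0 := sub_ne_zero.2 hap
    have hc : t * u + t' * u' = 0 := by
      rcases smul_eq_zero.1 hzero with h | h
      · exact h
      · exact absurd h hne
    have hu0 : u = 0 := by nlinarith
    have hu'0 : u' = 0 := by nlinarith
    constructor
    · rw [← hxx, hu0]; have : v = 1 := by linarith
      rw [this]; simp
    · rw [← hyy, hu'0]; have : v' = 1 := by linarith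
      rw [this]; simp

theorem main_ind : ∀ (n : ℕ) (V : Finset (ℤ × ℤ)),
    {q : ℤ×ℤ | latpt q ∈ convexHull ℝ (latpt '' (V : Set (ℤ×ℤ)))}.ncard ≤ n →
    2 ≤ (Set.extremePoints ℝ (convexHull ℝ (latpt '' (V : Set (ℤ×ℤ))))).ncard →
    ∃ V' : Finset (ℤ × ℤ),
      convexHull ℝ (latpt '' (V' : Set (ℤ×ℤ))) ⊆ convexHull ℝ (latpt '' (V : Set (ℤ×ℤ))) ∧
      (Set.extremePoints ℝ (convexHull ℝ (latpt '' (V' : Set (ℤ×ℤ))))).ncard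
        = (Set.extremePoints ℝ (convexHull ℝ (latpt '' (V : Set (ℤ×ℤ))))).ncard ∧
      ∀ p : ℤ × ℤ, latpt p ∈ frontier (convexHull ℝ (latpt '' (V' : Set (ℤ×ℤ)))) →
        latpt p ∈ Set.extremePoints ℝ (convexHull ℝ (latpt '' (V' : Set (ℤ×ℤ)))) := by
  intro n
  induction n with
  | zero =>
    intro V hcount hv
    exfalso
    set P := convexHull ℝ (latpt '' (V : Set (ℤ×ℤ))) with hPdef
    have hVfin : (latpt '' (V : Set (ℤ×ℤ))).Finite := V.finite_toSet.image _
    have hPcomp : IsCompact P := hVfin.isCompact_convexHull ℝ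
    have hE_sub : Set.extremePoints ℝ P ⊆ latpt '' (V : Set (ℤ×ℤ)) :=
      extremePoints_convexHull_subset
    have hEne : (Set.extremePoints ℝ P).Nonempty :=
      Set.nonempty_of_ncard_ne_zero (by omega)
    obtain ⟨e, he⟩ := hEne
    obtain ⟨q, _, rfl⟩ := hE_sub he
    have hqP : latpt q ∈ P := extremePoints_subset he
    have hne : ({q' : ℤ×ℤ | latpt q' ∈ P}).Nonempty := ⟨q, hqP⟩
    have hfin := lattice_finite hPcomp.isBounded
    have := (Set.ncard_pos hfin).2 hne
    omega
  | succ n ih =>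
    intro V hcount hv
    classical
    set P := convexHull ℝ (latpt '' (V : Set (ℤ×ℤ))) with hPdef
    set E := Set.extremePoints ℝ P with hEdef
    have hPconv : Convex ℝ P := convex_convexHull ℝ _
    have hVfin : (latpt '' (V : Set (ℤ×ℤ))).Finite := V.finite_toSet.image _
    have hPcomp : IsCompact P := hVfin.isCompact_convexHull ℝ
    have hPclosed : IsClosed P := hPcomp.isClosed
    have hE_sub : E ⊆ latpt '' (V : Set (ℤ×ℤ)) := extremePoints_convexHull_subset
    have hEfin : E.Finite := hVfin.subset hE_sub
    by_cases hgood : ∀ p : ℤ×ℤ, latpt p ∈ frontier P → latpt p ∈ E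
    · exact ⟨V, subset_rfl, rfl, hgood⟩
    push_neg at hgood
    obtain ⟨p, hpf, hpE⟩ := hgood
    have hpP : latpt p ∈ P := by
      have := frontier_subset_closure (s := P) hpf
      rwa [hPclosed.closure_eq] at this
    have hEhull : convexHull ℝ E = P := by
      have h1 := closure_convexHull_extremePoints hPcomp hPconv
      have h2 : IsClosed (convexHull ℝ E) := (hEfin.isCompact_convexHull ℝ).isClosed
      rw [← hEdef] at h1
      rw [← h1, h2.closure_eq]
    -- supporting functional
    obtain ⟨f, c, hfc, hfle, hcol⟩ :
        ∃ (f : (ℝ×ℝ) →L[ℝ] ℝ) (c : ℝ), f (latpt p) = c ∧ (∀ x ∈ P, f x ≤ c) ∧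
          Collinear ℝ {x : ℝ×ℝ | x ∈ E ∧ f x = c} := by
      by_cases hint : (interior P).Nonempty
      · have hpnotint : latpt p ∉ interior P := fun h => hpf.2 h
        obtain ⟨f, hf⟩ := geometric_hahn_banach_open_point hPconv.interior isOpen_interior
          hpnotint
        obtain ⟨a₀, ha₀⟩ := hint
        set c := f (latpt p) with hc
        have hfa : f a₀ < c := hf a₀ ha₀
        have hfle : ∀ x ∈ P, f x ≤ c := by
          intro x hx
          by_contra hgt
          push_neg at hgt
          have hpos : 0 < f x - f a₀ := by linarith
          set t : ℝ := min 1 ((f x - c)/(2*(f x - f a₀))) with ht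
          have htpos : 0 < t := lt_min one_pos (div_pos (by linarith) (by linarith))
          have ht1 : t ≤ 1 := min_le_left _ _
          have hmem := hPconv.add_smul_sub_mem_interior hx ha₀ ⟨htpos, ht1⟩
          have hlt := hf _ hmem
          rw [map_add, map_smul, map_sub] at hlt
          simp only [smul_eq_mul] at hlt
          have hts : t * (f x - f a₀) ≤ (f x - c)/2 := by
            have hmin := min_le_right 1 ((f x - c)/(2*(f x - f a₀)))
            calc t * (f x - f a₀) ≤ (f x - c)/(2*(f x - f a₀)) * (f x - f a₀) :=
                  mul_le_mul_of_nonneg_right hmin (le_of_lt hpos)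
              _ = (f x - c)/2 := by field_simp
          nlinarith
        have hfne : f ≠ 0 := by
          intro h
          rw [h] at hfa
          simp only [ContinuousLinearMap.zero_apply] at hfa
          rw [hc, h] at hfa
          simp at hfa
        exact ⟨f, c, rfl, hfle, (collinear_of_functional f hfne c).subset
          (fun x hx => hx.2)⟩
      · refine ⟨0, 0, by simp, by simp, ?_⟩
        have hPne : P.Nonempty := ⟨latpt p, hpP⟩
        have hspan : affineSpan ℝ P ≠ ⊤ := by
          intro h
          exact hint ((hPconv.interior_nonempty_iff_affineSpan_eq_top).2 h)
        have hcolP : Collinear ℝ P := by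
          rw [collinear_iff_finrank_le_one]
          have hdir : (affineSpan ℝ P).direction ≠ ⊤ := by
            intro h
            exact hspan ((AffineSubspace.direction_eq_top_iff_of_nonempty
              (hPne.mono (subset_affineSpan ℝ P))).1 h)
          have hlt : Module.finrank ℝ (affineSpan ℝ P).direction < Module.finrank ℝ (ℝ×ℝ) :=
            Submodule.finrank_lt hdir
          have h2 : Module.finrank ℝ (ℝ×ℝ) = 2 := by
            simp [Module.finrank_prod]
          rw [← direction_affineSpan]
          omega
        exact hcolP.subset (fun x hx => extremePoints_subset (hx.1 : x ∈ E))
    set Sc : Set (ℝ×ℝ) := {x : ℝ×ℝ | x ∈ E ∧ f x = c} with hScdef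
    have hfEle : ∀ e ∈ hEfin.toFinset, f e ≤ c := fun e he =>
      hfle e (extremePoints_subset (hEfin.mem_toFinset.1 he))
    have hpSc : latpt p ∈ convexHull ℝ Sc := by
      have hface := face_lemma hEfin.toFinset f c hfEle (x := latpt p)
        (by rw [Set.Finite.coe_toFinset, hEhull]; exact hpP) hfc
      convert hface using 2
      ext s
      simp [hScdef, Set.Finite.mem_toFinset]
    have hpSc' : latpt p ∉ Sc := fun h => hpE h.1
    obtain ⟨A₀, B₀, hScAB⟩ := collinear_extreme_sub (A := P) (fun x hx => hx.1) hcol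
    obtain ⟨A, B, hABne, hSceq⟩ : ∃ A B : ℝ×ℝ, A ≠ B ∧ Sc = {A, B} := by
      by_cases h2 : ∃ x ∈ Sc, ∃ y ∈ Sc, x ≠ y
      · obtain ⟨x, hx, y, hy, hxy⟩ := h2
        refine ⟨x, y, hxy, ?_⟩
        apply Set.Subset.antisymm
        · intro z hz
          have hzAB := hScAB hz
          have hxAB := hScAB hx
          have hyAB := hScAB hy
          simp only [Set.mem_insert_iff, Set.mem_singleton_iff] at hzAB hxAB hyAB ⊢
          rcases hxAB with rfl | rfl <;> rcases hyAB with rfl | rfl <;> tauto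
        · rintro z (rfl | rfl)
          · exact hx
          · exact hy
      · push_neg at h2
        exfalso
        rcases Set.eq_empty_or_nonempty Sc with he | ⟨x, hx⟩
        · rw [he, convexHull_empty] at hpSc
          exact hpSc
        · have hsub1 : Sc ⊆ {x} := fun y hy => h2 y hy x hx
          have hmem := convexHull_mono hsub1 hpSc
          rw [convexHull_singleton] at hmem
          rw [Set.mem_singleton_iff] at hmem
          exact hpSc' (hmem ▸ hx)
    have hA_Sc : A ∈ Sc := by rw [hSceq]; exact Set.mem_insert _ _
    have hB_Sc : B ∈ Sc := by rw [hSceq]; exact Set.mem_insert_of_mem _ rfl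
    have hAE : A ∈ E := hA_Sc.1
    have hBE : B ∈ E := hB_Sc.1
    obtain ⟨b, hbV, hbB⟩ := hE_sub hBE
    set E₀ : Finset (ℤ×ℤ) := V.filter (fun v => latpt v ∈ E) with hE₀def
    have hE₀img : latpt '' (E₀ : Set (ℤ×ℤ)) = E := by
      apply Set.Subset.antisymm
      · rintro x ⟨v, hv, rfl⟩
        exact (Finset.mem_filter.1 hv).2
      · intro e he
        obtain ⟨v, hvV, rfl⟩ := hE_sub he
        exact ⟨v, Finset.mem_filter.2 ⟨hvV, he⟩, rfl⟩
    set W : Finset (ℤ×ℤ) := insert p (E₀.erase b) with hWdef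
    have hWimg : latpt '' (W : Set (ℤ×ℤ)) = insert (latpt p) (E \ {B}) := by
      rw [hWdef, Finset.coe_insert, Set.image_insert_eq, Finset.coe_erase,
        Set.image_diff latpt_inj, Set.image_singleton, hE₀img, hbB]
    set Q := convexHull ℝ (latpt '' (W : Set (ℤ×ℤ))) with hQdef
    have hQset : latpt '' (W : Set (ℤ×ℤ)) ⊆ P := by
      rw [hWimg]
      rintro x (rfl | ⟨hxE, -⟩)
      · exact hpP
      · exact extremePoints_subset hxE
    have hQP : Q ⊆ P := convexHull_min hQset hPconv
    have hfQle : ∀ x ∈ Q, f x ≤ c := fun x hx => hfle x (hQP hx)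
    have hpQ : latpt p ∈ Q := subset_convexHull ℝ _ (by rw [hWimg]; exact Set.mem_insert _ _)
    have hEQ : ∀ e, e ∈ E \ {B} → e ∈ Set.extremePoints ℝ Q := by
      intro e he
      have heQ : e ∈ Q := subset_convexHull ℝ _
        (by rw [hWimg]; exact Set.mem_insert_of_mem _ he)
      exact inter_extremePoints_subset_extremePoints_of_subset hQP ⟨heQ, he.1⟩
    have hpext : latpt p ∈ Set.extremePoints ℝ Q := by
      rw [mem_extremePoints]
      refine ⟨hpQ, ?_⟩
      intro x₁ hx₁ x₂ hx₂ hseg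
      obtain ⟨t, t', ht, ht', htt, heq⟩ := hseg
      have hf1 : f x₁ ≤ c := hfQle x₁ hx₁
      have hf2 : f x₂ ≤ c := hfQle x₂ hx₂
      have hfeq : t * f x₁ + t' * f x₂ = c := by
        rw [← hfc, ← heq]
        simp [map_add, map_smul, smul_eq_mul]
      have hfx₁ : f x₁ = c := by
        by_contra hne
        have hlt1 : f x₁ < c := lt_of_le_of_ne hf1 hne
        have hm1 := mul_lt_mul_of_pos_left hlt1 ht
        have hm2 := mul_le_mul_of_nonneg_left hf2 ht'.le
        have h3 : t*c + t'*c = c := by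
          have := congrArg (· * c) htt
          simpa [add_mul] using this
        linarith
      have hfx₂ : f x₂ = c := by
        by_contra hne
        have hlt2 : f x₂ < c := lt_of_le_of_ne hf2 hne
        have hm1 := mul_lt_mul_of_pos_left hlt2 ht'
        have hm2 := mul_le_mul_of_nonneg_left hf1 ht.le
        have h3 : t*c + t'*c = c := by
          have := congrArg (· * c) htt
          simpa [add_mul] using this
        linarith
      set T : Finset (ℝ×ℝ) := W.image latpt with hTdef
      have hcoeT : (T : Set (ℝ×ℝ)) = latpt '' (W : Set (ℤ×ℤ)) := Finset.coe_image
      have hTle : ∀ s ∈ T, f s ≤ c := by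
        intro s hs
        apply hfle
        apply hQset
        rw [← hcoeT]
        exact hs
      have hface₁ := face_lemma T f c hTle (x := x₁) (by rw [hcoeT]; exact hx₁) hfx₁
      have hface₂ := face_lemma T f c hTle (x := x₂) (by rw [hcoeT]; exact hx₂) hfx₂
      have hsmall : {s : ℝ×ℝ | s ∈ T ∧ f s = c} ⊆ {A, latpt p} := by
        rintro s ⟨hsT, hsc⟩
        have hsW : s ∈ latpt '' (W : Set (ℤ×ℤ)) := by rw [← hcoeT]; exact hsT
        rw [hWimg] at hsW
        rcases hsW with rfl | hsE
        · exact Set.mem_insert_of_mem _ rfl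
        · have hsSc : s ∈ Sc := ⟨hsE.1, hsc⟩
          rw [hSceq] at hsSc
          rcases hsSc with rfl | rfl
          · exact Set.mem_insert _ _
          · exact absurd rfl hsE.2
      have hseg₁ : x₁ ∈ segment ℝ A (latpt p) := by
        have := (convexHull_mono hsmall) hface₁
        rwa [convexHull_pair] at this
      have hseg₂ : x₂ ∈ segment ℝ A (latpt p) := by
        have := (convexHull_mono hsmall) hface₂
        rwa [convexHull_pair] at this
      exact endpoint_extreme hseg₁ hseg₂ ⟨t, t', ht, ht', htt, heq⟩
    have hQext : Set.extremePoints ℝ Q = insert (latpt p) (E \ {B}) := by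
      apply Set.Subset.antisymm
      · intro x hx
        have hxW : x ∈ latpt '' (W : Set (ℤ×ℤ)) := extremePoints_convexHull_subset hx
        rwa [hWimg] at hxW
      · rintro x (rfl | hx)
        · exact hpext
        · exact hEQ x hx
    have hpnotin : latpt p ∉ E \ {B} := fun h => hpE h.1
    have hBnotp : B ≠ latpt p := fun h => hpE (h ▸ hBE)
    have hcard : (Set.extremePoints ℝ Q).ncard = E.ncard := by
      rw [hQext, Set.ncard_insert_of_notMem hpnotin hEfin.diff,
        Set.ncard_diff_singleton_of_mem hBE]
      omega
    have hBQ : B ∉ Q := by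
      intro hB
      have hBext : B ∈ Set.extremePoints ℝ Q :=
        inter_extremePoints_subset_extremePoints_of_subset hQP ⟨hB, hBE⟩
      rw [hQext] at hBext
      rcases hBext with h | h
      · exact hBnotp h
      · exact h.2 rfl
    have hssub : {q : ℤ×ℤ | latpt q ∈ Q} ⊂ {q : ℤ×ℤ | latpt q ∈ P} := by
      constructor
      · intro q hq
        exact hQP hq
      · intro hsup
        have hbP : b ∈ {q : ℤ×ℤ | latpt q ∈ P} := by
          show latpt b ∈ P
          rw [hbB]
          exact extremePoints_subset hBE
        have := hsup hbP
        rw [Set.mem_setOf_eq, hbB] at this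
        exact hBQ this
    have hlt : {q : ℤ×ℤ | latpt q ∈ Q}.ncard < {q : ℤ×ℤ | latpt q ∈ P}.ncard :=
      Set.ncard_lt_ncard hssub (lattice_finite hPcomp.isBounded)
    have hWcount : {q : ℤ×ℤ | latpt q ∈ Q}.ncard ≤ n := by omega
    have hWv : 2 ≤ (Set.extremePoints ℝ Q).ncard := by rw [hcard]; exact hv
    obtain ⟨V', h1, h2, h3⟩ := ih W hWcount hWv
    exact ⟨V', h1.trans hQP, by rw [h2]; exact hcard, h3⟩

theorem stmt13 (V : Finset (ℤ × ℤ)) (P : Set (ℝ × ℝ))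
    (hP : P = convexHull ℝ (latpt '' (V : Set (ℤ × ℤ))))
    (hv : 2 ≤ (Set.extremePoints ℝ P).ncard) :
    ∃ V' : Finset (ℤ × ℤ),
      convexHull ℝ (latpt '' (V' : Set (ℤ × ℤ))) ⊆ P ∧
      (Set.extremePoints ℝ (convexHull ℝ (latpt '' (V' : Set (ℤ × ℤ))))).ncard
        = (Set.extremePoints ℝ P).ncard ∧
      ∀ p : ℤ × ℤ, latpt p ∈ frontier (convexHull ℝ (latpt '' (V' : Set (ℤ × ℤ)))) →
        latpt p ∈ Set.extremePoints ℝ (convexHull ℝ (latpt '' (V' : Set (ℤ × ℤ)))) := by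
  subst hP
  exact main_ind _ V le_rfl hv
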